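/- If U is a real unitary N×N matrix (U U^T = I) such that the linear transformation x ↦ Ux is self-dual (i.e., ⟨Ax, Ux⟩ integrates to zero over the unit ball for every anti-symmetric bilinear form ⟨A·,·⟩ with A^T = −A), then U is symmetric and U² = I. -/

import Mathlib

open MeasureTheory Matrix

/-- If `U` is a real orthogonal `N × N` matrix such that `x ↦ Ux` is a self-dual
transformation (i.e. `∫_B ⟨Ax, Ux⟩ dx = 0` over the unit ball for every
anti-symmetric matrix `A`), then `U` is symmetric and `U² = I`. -/
theorem selfdual_unitary_is_symmetric_involution
    {N : ℕ} (U : Matrix (Fin N) (Fin N) ℝ)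
    (hU : U * Uᵀ = 1)
    (hsd : ∀ A : Matrix (Fin N) (Fin N) ℝ, Aᵀ = -A →
      (∫ x in Metric.ball (0 : EuclideanSpace ℝ (Fin N)) 1,
        (inner ℝ (Matrix.toEuclideanLin A x) (Matrix.toEuclideanLin U x) : ℝ)) = 0) :
    Uᵀ = U ∧ U * U = 1 := by
  classical
  have hUU : Uᵀ * U = 1 := mul_eq_one_comm.mp hU
  -- transpose = conjTranspose over ℝ
  have hct : ∀ M : Matrix (Fin N) (Fin N) ℝ, Mᴴ = Mᵀ := by
    intro M; ext i j; simp [Matrix.conjTranspose_apply]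
  -- composition lemma
  have Lmul : ∀ (M B : Matrix (Fin N) (Fin N) ℝ) (x : EuclideanSpace ℝ (Fin N)),
      Matrix.toEuclideanLin (M * B) x
        = Matrix.toEuclideanLin M (Matrix.toEuclideanLin B x) := by
    intro M B x
    simp [Matrix.toEuclideanLin_apply, Matrix.mulVec_mulVec]
  have Lone : ∀ x : EuclideanSpace ℝ (Fin N), Matrix.toEuclideanLin (1 : Matrix (Fin N) (Fin N) ℝ) x = x := by
    intro x
    simp [Matrix.toEuclideanLin_apply, Matrix.one_mulVec]
  -- adjoint identity
  have key : ∀ (M B : Matrix (Fin N) (Fin N) ℝ) (x : EuclideanSpace ℝ (Fin N)),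
      (inner ℝ (Matrix.toEuclideanLin M x) (Matrix.toEuclideanLin B x) : ℝ)
        = inner ℝ x (Matrix.toEuclideanLin (Mᵀ * B) x) := by
    intro M B x
    have hadj : Matrix.toEuclideanLin Mᵀ
        = LinearMap.adjoint (Matrix.toEuclideanLin M) := by
      rw [← hct M]; exact Matrix.toEuclideanLin_conjTranspose_eq_adjoint M
    rw [Lmul, hadj, LinearMap.adjoint_inner_right]
  -- norm preservation
  have hnorm : ∀ x : EuclideanSpace ℝ (Fin N), ‖Matrix.toEuclideanLin U x‖ = ‖x‖ := by
    intro x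
    have h1 : (inner ℝ (Matrix.toEuclideanLin U x) (Matrix.toEuclideanLin U x) : ℝ)
        = inner ℝ x x := by
      rw [key U U x, hUU, Lone]
    rw [real_inner_self_eq_norm_sq, real_inner_self_eq_norm_sq] at h1
    nlinarith [norm_nonneg (Matrix.toEuclideanLin U x), norm_nonneg x]
  set g : EuclideanSpace ℝ (Fin N) →ₗ[ℝ] EuclideanSpace ℝ (Fin N) :=
    Matrix.toEuclideanLin (U * U) with hg
  have hgnorm : ∀ x, ‖g x‖ = ‖x‖ := by
    intro x
    rw [hg, Lmul, hnorm, hnorm]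
  set f : EuclideanSpace ℝ (Fin N) → ℝ :=
    fun x => (inner ℝ (Matrix.toEuclideanLin (U - Uᵀ) x) (Matrix.toEuclideanLin U x) : ℝ)
    with hf
  have h0 : ∀ x, f x = ‖x‖ ^ 2 - inner ℝ x (g x) := by
    intro x
    have hsub : Matrix.toEuclideanLin (U - Uᵀ) x
        = Matrix.toEuclideanLin U x - Matrix.toEuclideanLin Uᵀ x := by
      rw [map_sub]; rfl
    rw [hf]
    simp only [hsub, inner_sub_left]
    rw [key U U x, hUU, Lone, real_inner_self_eq_norm_sq, key Uᵀ U x,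
      Matrix.transpose_transpose, hg]
  have hnonneg : ∀ x, 0 ≤ f x := by
    intro x
    rw [h0]
    have h1 : (inner ℝ x (g x) : ℝ) ≤ ‖x‖ * ‖g x‖ := real_inner_le_norm x (g x)
    rw [hgnorm] at h1
    nlinarith
  have hcont : Continuous f := by
    apply Continuous.inner
    · exact (Matrix.toEuclideanLin (U - Uᵀ)).continuous_of_finiteDimensional
    · exact (Matrix.toEuclideanLin U).continuous_of_finiteDimensional
  have hA : (U - Uᵀ)ᵀ = -(U - Uᵀ) := by
    rw [Matrix.transpose_sub, Matrix.transpose_transpose, neg_sub]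
  have hint : (∫ x in Metric.ball (0 : EuclideanSpace ℝ (Fin N)) 1, f x) = 0 :=
    hsd (U - Uᵀ) hA
  have hintg : IntegrableOn f (Metric.ball (0 : EuclideanSpace ℝ (Fin N)) 1) volume := by
    apply (hcont.continuousOn.integrableOn_compact
      (isCompact_closedBall (0 : EuclideanSpace ℝ (Fin N)) 1)).mono_set
    exact Metric.ball_subset_closedBall
  have hae : f =ᵐ[volume.restrict (Metric.ball (0 : EuclideanSpace ℝ (Fin N)) 1)] 0 :=
    (integral_eq_zero_iff_of_nonneg hnonneg hintg).mp hint
  have heq : Set.EqOn f 0 (Metric.ball (0 : EuclideanSpace ℝ (Fin N)) 1) :=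
    Measure.eqOn_open_of_ae_eq hae Metric.isOpen_ball hcont.continuousOn
      continuousOn_const
  -- g fixes everything in the ball
  have hfix : ∀ x ∈ Metric.ball (0 : EuclideanSpace ℝ (Fin N)) 1, g x = x := by
    intro x hx
    by_cases hx0 : x = 0
    · rw [hx0, map_zero]
    · have hfx : f x = 0 := heq hx
      rw [h0] at hfx
      have hcs : (inner ℝ x (g x) : ℝ) = ‖x‖ * ‖g x‖ := by
        rw [hgnorm]; nlinarith
      have := inner_eq_norm_mul_iff_real.mp hcs
      rw [hgnorm] at this
      have hnx : ‖x‖ ≠ 0 := fun h => hx0 (norm_eq_zero.mp h)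
      exact (smul_right_injective _ hnx this).symm
  -- g = id
  have hgid : ∀ y : EuclideanSpace ℝ (Fin N), g y = y := by
    intro y
    by_cases hy : y = 0
    · rw [hy, map_zero]
    · have hny : (0:ℝ) < ‖y‖ := norm_pos_iff.mpr hy
      set c : ℝ := 1 / (2 * ‖y‖) with hc
      have hcpos : 0 < c := by positivity
      have hmem : c • y ∈ Metric.ball (0 : EuclideanSpace ℝ (Fin N)) 1 := by
        rw [Metric.mem_ball, dist_zero_right, norm_smul, Real.norm_eq_abs,
          abs_of_pos hcpos, hc]
        rw [div_mul_eq_mul_div, one_mul, div_lt_one (by positivity)]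
        nlinarith
      have := hfix (c • y) hmem
      rw [LinearMap.map_smul] at this
      exact smul_right_injective _ (ne_of_gt hcpos) this
  have hUU2 : U * U = 1 := by
    apply Matrix.toEuclideanLin.injective
    ext x
    have h1 := hgid x
    rw [hg] at h1
    rw [h1, Lone]
  refine ⟨?_, hUU2⟩
  calc Uᵀ = 1 * Uᵀ := (one_mul _).symm
    _ = (U * U) * Uᵀ := by rw [hUU2]
    _ = U * (U * Uᵀ) := by rw [mul_assoc]
    _ = U := by rw [hU, mul_one]
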